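/- arXiv:1203.0721 — 5 statements merged into one kernel-verified Lean document; each statement's English description precedes it below -/
import Mathlib

section
/- Consider the Cucker–Smale system of N individuals in ℝ^d: for i = 1,…,N, the trajectories x_i, v_i : ℝ → ℝ^d are differentiable and satisfy x_i'(t) = v_i(t) and v_i'(t) = (1/N) · Σ_{j=1}^N H(‖x_j(t) − x_i(t)‖) (v_j(t) − v_i(t)), where H(r) = K/(ς² + r²)^γ with K, ς > 0 and 0 ≤ γ ≤ 1/2. Define Γ(t) = (1/2) Σ_{i≠j} ‖x_i(t) − x_j(t)‖². Then there exists a positive constant B₀ such that Γ(t) ≤ B₀ for all t ≥ 0. -/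
open Filter Finset


lemma cs_sum_antisymm {ι : Type*} [Fintype ι] (f : ι → ι → ℝ)
    (h : ∀ i j, f i j = - f j i) : ∑ i, ∑ j, f i j = 0 := by
  have h2 : ∑ i, ∑ j, f i j = ∑ i, ∑ j, -(f i j) := by
    rw [Finset.sum_comm]
    exact Finset.sum_congr rfl fun a _ => Finset.sum_congr rfl fun b _ => h b a
  simp only [Finset.sum_neg_distrib] at h2
  linarith

lemma cs_swap_eq {ι : Type*} [Fintype ι] (f : ι → ι → ℝ) :
    ∑ i, ∑ j, f i j = ∑ i, ∑ j, f j i := by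
  rw [Finset.sum_comm]

lemma cs_scalar_id {ι : Type*} [Fintype ι] (c p : ι → ι → ℝ) (hc : ∀ i j, c i j = c j i)
    (Nr : ℝ) (hNr : Nr = (Fintype.card ι : ℝ)) (h0 : Nr ≠ 0) :
    2 * (Nr⁻¹ * ∑ i, ∑ k, ∑ j, c i k * (p i k - p i i - p j k + p j i))
      = - ∑ i, ∑ j, c i j * (p i i - 2 * p i j + p j j) := by
  have inner : ∀ i k : ι, ∑ j : ι, c i k * (p i k - p i i - p j k + p j i)
      = Nr * (c i k * (p i k - p i i)) - (c i k * (∑ j, p j k) - c i k * (∑ j, p j i)) := by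
    intro i k
    have e : ∀ j : ι, c i k * (p i k - p i i - p j k + p j i)
        = c i k * (p i k - p i i) - (c i k * p j k - c i k * p j i) := by intro j; ring
    simp_rw [e, Finset.sum_sub_distrib, Finset.sum_const, Finset.card_univ, nsmul_eq_mul,
      ← Finset.mul_sum, hNr]
  simp_rw [inner, Finset.sum_sub_distrib]
  have hanti : ∑ i : ι, ∑ k : ι, (c i k * (∑ j, p j k) - c i k * (∑ j, p j i)) = 0 := by
    apply cs_sum_antisymm
    intro i k
    rw [hc i k]; ring
  simp_rw [Finset.sum_sub_distrib] at hanti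
  rw [hanti, sub_zero]
  have hCB : ∑ i : ι, ∑ k : ι, c i k * p k k = ∑ i : ι, ∑ k : ι, c i k * p i i := by
    rw [cs_swap_eq]
    exact Finset.sum_congr rfl fun a _ => Finset.sum_congr rfl fun b _ => by rw [hc b a]
  have expand1 : ∀ i k : ι, c i k * (p i i - 2 * p i k + p k k)
      = c i k * p i i - 2 * (c i k * p i k) + c i k * p k k := by intro i k; ring
  have expand2 : ∀ i k : ι, Nr * (c i k * (p i k - p i i))
      = Nr * (c i k * p i k) - Nr * (c i k * p i i) := by intro i k; ring
  simp_rw [expand1, expand2, Finset.sum_sub_distrib, Finset.sum_add_distrib, ← Finset.mul_sum]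
  rw [hCB]
  have e3 : ∑ a : ι, ∑ b : ι, 2 * c a b * p a b = 2 * ∑ a : ι, ∑ b : ι, c a b * p a b := by
    simp_rw [mul_assoc, ← Finset.mul_sum]
  field_simp
  ring_nf
  simp only [Finset.sum_sub_distrib, ← Finset.sum_mul]
  ring

lemma cs_identity {ι : Type*} [Fintype ι] {E : Type*} [NormedAddCommGroup E]
    [InnerProductSpace ℝ E] (w : ι → E) (c : ι → ι → ℝ) (hc : ∀ i j, c i j = c j i)
    (Nr : ℝ) (hNr : Nr = (Fintype.card ι : ℝ)) (h0 : Nr ≠ 0) :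
    ∑ i, ∑ j, (inner ℝ (w i - w j)
        (Nr⁻¹ • ∑ k, c i k • (w k - w i) - Nr⁻¹ • ∑ k, c j k • (w k - w j)) : ℝ)
      = - ∑ i, ∑ j, c i j * (inner ℝ (w i - w j) (w i - w j) : ℝ) := by
  set b : ι → E := fun i => Nr⁻¹ • ∑ k, c i k • (w k - w i) with hb
  set p : ι → ι → ℝ := fun i j => (inner ℝ (w i) (w j) : ℝ) with hp
  have hpsymm : ∀ i j, p i j = p j i := fun i j => real_inner_comm _ _
  have step1 : ∑ i, ∑ j, (inner ℝ (w i - w j) (b i - b j) : ℝ)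
      = 2 * ∑ i, ∑ j, (inner ℝ (w i - w j) (b i) : ℝ) := by
    have e : ∀ i j : ι, (inner ℝ (w i - w j) (b i - b j) : ℝ)
        = (inner ℝ (w i - w j) (b i) : ℝ) - (inner ℝ (w i - w j) (b j) : ℝ) := by
      intro i j; rw [inner_sub_right]
    simp_rw [e, Finset.sum_sub_distrib]
    have hf : ∑ i, ∑ j, (inner ℝ (w i - w j) (b j) : ℝ)
        = - ∑ i, ∑ j, (inner ℝ (w i - w j) (b i) : ℝ) := by
      rw [Finset.sum_comm]
      rw [← Finset.sum_neg_distrib]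
      refine Finset.sum_congr rfl fun a _ => ?_
      rw [← Finset.sum_neg_distrib]
      refine Finset.sum_congr rfl fun i _ => ?_
      rw [← inner_neg_left, neg_sub]
    rw [hf]; ring
  have step2 : ∀ i j : ι, (inner ℝ (w i - w j) (b i) : ℝ)
      = Nr⁻¹ * ∑ k, c i k * (p i k - p i i - p j k + p j i) := by
    intro i j
    rw [hb]
    rw [real_inner_smul_right, inner_sum]
    congr 1
    refine Finset.sum_congr rfl fun k _ => ?_
    rw [real_inner_smul_right]
    congr 1
    simp only [inner_sub_left, inner_sub_right, hp]
    ring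
  have step3 : ∀ i j : ι, c i j * (inner ℝ (w i - w j) (w i - w j) : ℝ)
      = c i j * (p i i - 2 * p i j + p j j) := by
    intro i j
    congr 1
    simp only [inner_sub_left, inner_sub_right, hp]
    rw [real_inner_comm (w j) (w i)]
    ring
  calc ∑ i, ∑ j, (inner ℝ (w i - w j) (b i - b j) : ℝ)
      = 2 * ∑ i, ∑ j, (inner ℝ (w i - w j) (b i) : ℝ) := step1
    _ = 2 * (Nr⁻¹ * ∑ i, ∑ k, ∑ j, c i k * (p i k - p i i - p j k + p j i)) := by
        simp_rw [step2]
        have e4 : ∀ i : ι, ∑ j : ι, Nr⁻¹ * ∑ k, c i k * (p i k - p i i - p j k + p j i)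
            = Nr⁻¹ * ∑ k, ∑ j : ι, c i k * (p i k - p i i - p j k + p j i) := by
          intro i
          rw [← Finset.mul_sum]
          congr 1
          exact Finset.sum_comm
        simp_rw [e4]
        rw [← Finset.mul_sum]
    _ = - ∑ i, ∑ j, c i j * (p i i - 2 * p i j + p j j) := cs_scalar_id c p hc Nr hNr h0
    _ = - ∑ i, ∑ j, c i j * (inner ℝ (w i - w j) (w i - w j) : ℝ) := by simp_rw [step3]


lemma cs_rpow_le (γ x : ℝ) (hγ0 : 0 ≤ γ) (hγ : γ ≤ 1/2) (hx : 0 ≤ x) :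
    x ^ γ ≤ 1 + Real.sqrt x := by
  rcases le_total x 1 with h | h
  · have h1 := Real.rpow_le_one hx h hγ0
    have h2 := Real.sqrt_nonneg x
    linarith
  · have h1 : x ^ γ ≤ x ^ (1/2 : ℝ) := Real.rpow_le_rpow_of_exponent_le h hγ
    rw [← Real.sqrt_eq_rpow] at h1
    linarith

lemma cs_key (K ς γ u : ℝ) (hK : 0 < K) (hς : 0 < ς) (hγ0 : 0 ≤ γ) (hγ : γ ≤ 1/2)
    (hu : 0 ≤ u) : 2 * (K / (3 + ς)) * Real.sqrt u * (ς ^ 2 + u) ^ γ ≤ K * (1 + u) := by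
  have hbase : (0:ℝ) ≤ ς ^ 2 + u := by positivity
  have h1 : (ς ^ 2 + u) ^ γ ≤ 1 + Real.sqrt (ς ^ 2 + u) := cs_rpow_le γ _ hγ0 hγ hbase
  have h2 : Real.sqrt (ς ^ 2 + u) ≤ ς + Real.sqrt u := by
    have : ς ^ 2 + u ≤ (ς + Real.sqrt u) ^ 2 := by
      nlinarith [Real.sq_sqrt hu, Real.sqrt_nonneg u]
    calc Real.sqrt (ς ^ 2 + u) ≤ Real.sqrt ((ς + Real.sqrt u) ^ 2) := Real.sqrt_le_sqrt this
      _ = ς + Real.sqrt u := Real.sqrt_sq (by positivity)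
  have h3 : Real.sqrt u ≤ (1 + u) / 2 := by
    nlinarith [sq_nonneg (Real.sqrt u - 1), Real.sq_sqrt hu]
  have hc : 0 < K / (3 + ς) := by positivity
  have hcK : K / (3 + ς) * (3 + ς) = K := by field_simp
  have hs := Real.sqrt_nonneg u
  have hsq := Real.sq_sqrt hu
  have hRnn : (0:ℝ) ≤ (ς ^ 2 + u) ^ γ := Real.rpow_nonneg hbase γ
  have stepa : 2 * (K / (3 + ς)) * Real.sqrt u * ((ς ^ 2 + u) ^ γ)
      ≤ 2 * (K / (3 + ς)) * Real.sqrt u * (1 + ς + Real.sqrt u) := by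
    have hR : (ς ^ 2 + u) ^ γ ≤ 1 + ς + Real.sqrt u := by linarith
    have : (0:ℝ) ≤ 2 * (K / (3 + ς)) * Real.sqrt u := by positivity
    exact mul_le_mul_of_nonneg_left hR this
  have e1 : 2 * (K / (3 + ς)) * Real.sqrt u ≤ (K / (3 + ς)) * (1 + u) := by
    nlinarith [h3, hc]
  have e2 : 2 * (K / (3 + ς)) * ς * Real.sqrt u ≤ (K / (3 + ς)) * ς * (1 + u) := by
    nlinarith [h3, mul_pos hc hς]
  nlinarith [stepa, hsq, hc, hu, hcK, e1, e2, mul_nonneg hc.le hu]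


lemma cs_Dle (K ς γ ε u q QDv PDv : ℝ) (hK : 0 < K) (hς : 0 < ς)
    (hγ0 : 0 ≤ γ) (hγ : γ ≤ 1/2) (hε : 0 < ε) (hu : 0 ≤ u) (hq : 0 ≤ q)
    (hQDv : QDv ≤ -2 * (K / (ς ^ 2 + u) ^ γ) * q)
    (hPDv : PDv ≤ 2 * Real.sqrt u * Real.sqrt q) :
    QDv / (2 * Real.sqrt (q + ε)) + (K / (3 + ς)) * (PDv / (1 + u))
      ≤ (K / (ς ^ 2) ^ γ) * Real.sqrt ε := by
  have hbpos : (0:ℝ) < ς ^ 2 + u := by nlinarith [pow_pos hς 2]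
  set κ : ℝ := K / (ς ^ 2 + u) ^ γ with hκ
  set c : ℝ := K / (3 + ς) with hc
  have hcpos : 0 < c := by rw [hc]; positivity
  have hRpos : (0:ℝ) < (ς ^ 2 + u) ^ γ := Real.rpow_pos_of_pos hbpos γ
  have hκpos : 0 < κ := by rw [hκ]; positivity
  have hκM : κ ≤ K / (ς ^ 2) ^ γ := by
    rw [hκ]
    have h2 : (ς ^ 2 : ℝ) ^ γ ≤ (ς ^ 2 + u) ^ γ :=
      Real.rpow_le_rpow (by positivity) (by linarith) hγ0
    exact div_le_div_of_nonneg_left hK.le (Real.rpow_pos_of_pos (by positivity) γ) h2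
  have hsq : Real.sqrt (q + ε) * Real.sqrt (q + ε) = q + ε :=
    Real.mul_self_sqrt (by linarith)
  have hspos : 0 < Real.sqrt (q + ε) := Real.sqrt_pos.mpr (by linarith)
  have hse : Real.sqrt ε ≤ Real.sqrt (q + ε) := Real.sqrt_le_sqrt (by linarith)
  have hεs : Real.sqrt ε * Real.sqrt ε = ε := Real.mul_self_sqrt hε.le
  have hterm1 : QDv / (2 * Real.sqrt (q + ε))
      ≤ -κ * Real.sqrt (q + ε) + κ * Real.sqrt ε := by
    rw [div_le_iff₀ (by positivity)]
    have h2 : ε ≤ Real.sqrt ε * Real.sqrt (q + ε) := by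
      nlinarith [Real.sqrt_nonneg ε]
    nlinarith [hκpos]
  have hterm2 : c * (PDv / (1 + u)) ≤ κ * Real.sqrt (q + ε) := by
    have hkey := cs_key K ς γ u hK hς hγ0 hγ hu
    have h2c : 2 * c * Real.sqrt u ≤ κ * (1 + u) := by
      rw [hκ, div_mul_eq_mul_div, le_div_iff₀ hRpos]
      calc 2 * c * Real.sqrt u * (ς ^ 2 + u) ^ γ
          = 2 * (K / (3 + ς)) * Real.sqrt u * (ς ^ 2 + u) ^ γ := by rw [hc]
        _ ≤ K * (1 + u) := hkey
    have hqe : Real.sqrt q ≤ Real.sqrt (q + ε) := Real.sqrt_le_sqrt (by linarith)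
    rw [mul_div_assoc', div_le_iff₀ (by linarith : (0:ℝ) < 1 + u)]
    have hsu := Real.sqrt_nonneg u
    have hsq' := Real.sqrt_nonneg q
    nlinarith [mul_le_mul_of_nonneg_right h2c (Real.sqrt_nonneg q),
      mul_le_mul_of_nonneg_left hqe
        (mul_nonneg hκpos.le (by linarith : (0:ℝ) ≤ 1 + u)),
      mul_le_mul_of_nonneg_left hPDv hcpos.le]
  calc QDv / (2 * Real.sqrt (q + ε)) + c * (PDv / (1 + u))
      ≤ κ * Real.sqrt ε := by nlinarith [hterm1, hterm2]
    _ ≤ (K / (ς ^ 2) ^ γ) * Real.sqrt ε :=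
        mul_le_mul_of_nonneg_right hκM (Real.sqrt_nonneg ε)


set_option maxHeartbeats 1600000

/-- Cucker–Smale with `H(r) = K / (ς² + r²)^γ`, `0 ≤ γ ≤ 1/2`: the quantity
`Γ(t) = (1/2) ∑_{i≠j} ‖x_i(t) − x_j(t)‖²` is uniformly bounded for `t ≥ 0`. -/
theorem cucker_smale_position_spread_bounded
    {d N : ℕ} (hN : 1 ≤ N) (K ς γ : ℝ) (hK : 0 < K) (hς : 0 < ς)
    (hγ0 : 0 ≤ γ) (hγ : γ ≤ 1 / 2)
    (x v : Fin N → ℝ → EuclideanSpace ℝ (Fin d))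
    (hx : ∀ i t, HasDerivAt (x i) (v i t) t)
    (hv : ∀ i t, HasDerivAt (v i)
      ((N : ℝ)⁻¹ • ∑ j, (K / (ς ^ 2 + ‖x j t - x i t‖ ^ 2) ^ γ) • (v j t - v i t)) t) :
    ∃ B₀ > 0, ∀ t ≥ (0 : ℝ),
      (1 / 2 : ℝ) * ∑ i, ∑ j ∈ Finset.univ \ {i}, ‖x i t - x j t‖ ^ 2 ≤ B₀ := by
  have hN0 : ((N : ℝ)) ≠ 0 := Nat.cast_ne_zero.mpr (by omega)
  set Pf : ℝ → ℝ := fun t => ∑ i, ∑ j, (inner ℝ (x i t - x j t) (x i t - x j t) : ℝ) with hPf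
  set Qf : ℝ → ℝ := fun t => ∑ i, ∑ j, (inner ℝ (v i t - v j t) (v i t - v j t) : ℝ) with hQf
  set PD : ℝ → ℝ := fun t => 2 * ∑ i, ∑ j, (inner ℝ (x i t - x j t) (v i t - v j t) : ℝ) with hPD
  set QD : ℝ → ℝ := fun t => -2 * ∑ i, ∑ j,
      (K / (ς ^ 2 + ‖x j t - x i t‖ ^ 2) ^ γ) * (inner ℝ (v i t - v j t) (v i t - v j t) : ℝ)
    with hQD
  have hPnn : ∀ t, 0 ≤ Pf t := by
    intro t
    exact Finset.sum_nonneg fun i _ => Finset.sum_nonneg fun j _ => real_inner_self_nonneg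
  have hQnn : ∀ t, 0 ≤ Qf t := by
    intro t
    exact Finset.sum_nonneg fun i _ => Finset.sum_nonneg fun j _ => real_inner_self_nonneg
  have hP' : ∀ t, HasDerivAt Pf (PD t) t := by
    intro t
    have h1 : HasDerivAt Pf (∑ i, ∑ j, ((inner ℝ (x i t - x j t) (v i t - v j t) : ℝ)
        + (inner ℝ (v i t - v j t) (x i t - x j t) : ℝ))) t := by
      apply HasDerivAt.fun_sum
      intro i _
      apply HasDerivAt.fun_sum
      intro j _
      exact HasDerivAt.inner ℝ ((hx i t).sub (hx j t)) ((hx i t).sub (hx j t))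
    have e : ∑ i, ∑ j, ((inner ℝ (x i t - x j t) (v i t - v j t) : ℝ)
        + (inner ℝ (v i t - v j t) (x i t - x j t) : ℝ)) = PD t := by
      rw [hPD]
      simp only
      rw [Finset.mul_sum]
      refine Finset.sum_congr rfl fun i _ => ?_
      rw [Finset.mul_sum]
      refine Finset.sum_congr rfl fun j _ => ?_
      rw [real_inner_comm (v i t - v j t) (x i t - x j t)]
      ring
    rw [← e]
    exact h1
  have hQ' : ∀ t, HasDerivAt Qf (QD t) t := by
    intro t
    set a : Fin N → EuclideanSpace ℝ (Fin d) := fun i =>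
      (N : ℝ)⁻¹ • ∑ j, (K / (ς ^ 2 + ‖x j t - x i t‖ ^ 2) ^ γ) • (v j t - v i t) with ha
    have h1 : HasDerivAt Qf (∑ i, ∑ j, ((inner ℝ (v i t - v j t) (a i - a j) : ℝ)
        + (inner ℝ (a i - a j) (v i t - v j t) : ℝ))) t := by
      apply HasDerivAt.fun_sum
      intro i _
      apply HasDerivAt.fun_sum
      intro j _
      exact HasDerivAt.inner ℝ ((hv i t).sub (hv j t)) ((hv i t).sub (hv j t))
    have e : ∑ i, ∑ j, ((inner ℝ (v i t - v j t) (a i - a j) : ℝ)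
        + (inner ℝ (a i - a j) (v i t - v j t) : ℝ)) = QD t := by
      have e1 : ∀ i j : Fin N, (inner ℝ (v i t - v j t) (a i - a j) : ℝ)
          + (inner ℝ (a i - a j) (v i t - v j t) : ℝ)
          = 2 * (inner ℝ (v i t - v j t) (a i - a j) : ℝ) := by
        intro i j
        rw [real_inner_comm (a i - a j) (v i t - v j t)]
        ring
      simp_rw [e1, ← Finset.mul_sum]
      have e2 : ∑ i, ∑ j, (inner ℝ (v i t - v j t) (a i - a j) : ℝ)
          = - ∑ i, ∑ j, (K / (ς ^ 2 + ‖x j t - x i t‖ ^ 2) ^ γ)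
              * (inner ℝ (v i t - v j t) (v i t - v j t) : ℝ) := by
        have := cs_identity (fun i => v i t)
          (fun i k => K / (ς ^ 2 + ‖x k t - x i t‖ ^ 2) ^ γ)
          (fun i k => by
            show K / (ς ^ 2 + ‖x k t - x i t‖ ^ 2) ^ γ = K / (ς ^ 2 + ‖x i t - x k t‖ ^ 2) ^ γ
            rw [norm_sub_rev]) (N : ℝ) (by simp) hN0
        simpa [ha] using this
      rw [e2, hQD]
      ring
    rw [← e]
    exact h1
  have hPXnorm : ∀ t, Pf t = ∑ i, ∑ j, ‖x i t - x j t‖ ^ 2 := by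
    intro t
    exact Finset.sum_congr rfl fun i _ => Finset.sum_congr rfl fun j _ =>
      real_inner_self_eq_norm_sq _
  have hQVnorm : ∀ t, Qf t = ∑ i, ∑ j, ‖v i t - v j t‖ ^ 2 := by
    intro t
    exact Finset.sum_congr rfl fun i _ => Finset.sum_congr rfl fun j _ =>
      real_inner_self_eq_norm_sq _
  have hPDle : ∀ t, PD t ≤ 2 * Real.sqrt (Pf t) * Real.sqrt (Qf t) := by
    intro t
    have hS : ∑ i, ∑ j, (inner ℝ (x i t - x j t) (v i t - v j t) : ℝ)
        ≤ ∑ i, ∑ j, ‖x i t - x j t‖ * ‖v i t - v j t‖ := by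
      refine Finset.sum_le_sum fun i _ => Finset.sum_le_sum fun j _ => ?_
      exact real_inner_le_norm _ _
    have hT : ∑ i, ∑ j, ‖x i t - x j t‖ * ‖v i t - v j t‖
        ≤ Real.sqrt (Pf t) * Real.sqrt (Qf t) := by
      have hCS := Finset.sum_mul_sq_le_sq_mul_sq Finset.univ
        (fun p : Fin N × Fin N => ‖x p.1 t - x p.2 t‖)
        (fun p : Fin N × Fin N => ‖v p.1 t - v p.2 t‖)
      simp only [Fintype.sum_prod_type] at hCS
      have hTnn : (0:ℝ) ≤ ∑ i, ∑ j, ‖x i t - x j t‖ * ‖v i t - v j t‖ :=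
        Finset.sum_nonneg fun i _ => Finset.sum_nonneg fun j _ =>
          mul_nonneg (norm_nonneg _) (norm_nonneg _)
      have := Real.sqrt_le_sqrt hCS
      rw [Real.sqrt_sq hTnn, Real.sqrt_mul (by positivity)] at this
      rw [hPXnorm t, hQVnorm t]
      exact this
    rw [hPD]
    simp only
    nlinarith [hS, hT]
  have hsingle : ∀ t (i j : Fin N), ‖x j t - x i t‖ ^ 2 ≤ Pf t := by
    intro t i j
    rw [hPXnorm t]
    calc ‖x j t - x i t‖ ^ 2
        ≤ ∑ b, ‖x j t - x b t‖ ^ 2 :=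
          Finset.single_le_sum (f := fun b => ‖x j t - x b t‖ ^ 2)
            (fun b _ => by positivity) (Finset.mem_univ i)
      _ ≤ ∑ a, ∑ b, ‖x a t - x b t‖ ^ 2 :=
          Finset.single_le_sum (f := fun a => ∑ b, ‖x a t - x b t‖ ^ 2)
            (fun a _ => Finset.sum_nonneg fun b _ => by positivity) (Finset.mem_univ j)
  have hQDle : ∀ t, QD t ≤ -2 * (K / (ς ^ 2 + Pf t) ^ γ) * Qf t := by
    intro t
    have hterm : ∀ i j : Fin N, (K / (ς ^ 2 + Pf t) ^ γ)
          * (inner ℝ (v i t - v j t) (v i t - v j t) : ℝ)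
        ≤ (K / (ς ^ 2 + ‖x j t - x i t‖ ^ 2) ^ γ)
          * (inner ℝ (v i t - v j t) (v i t - v j t) : ℝ) := by
      intro i j
      have hcoef : K / (ς ^ 2 + Pf t) ^ γ ≤ K / (ς ^ 2 + ‖x j t - x i t‖ ^ 2) ^ γ := by
        have h1 : (0:ℝ) < (ς ^ 2 + ‖x j t - x i t‖ ^ 2) ^ γ :=
          Real.rpow_pos_of_pos (by positivity) γ
        have h2 : (ς ^ 2 + ‖x j t - x i t‖ ^ 2) ^ γ ≤ (ς ^ 2 + Pf t) ^ γ :=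
          Real.rpow_le_rpow (by positivity) (by linarith [hsingle t i j]) hγ0
        exact div_le_div_of_nonneg_left hK.le h1 h2
      exact mul_le_mul_of_nonneg_right hcoef real_inner_self_nonneg
    have hsum : (K / (ς ^ 2 + Pf t) ^ γ) * Qf t
        ≤ ∑ i, ∑ j, (K / (ς ^ 2 + ‖x j t - x i t‖ ^ 2) ^ γ)
            * (inner ℝ (v i t - v j t) (v i t - v j t) : ℝ) := by
      rw [hQf]
      simp only
      rw [Finset.mul_sum]
      refine Finset.sum_le_sum fun i _ => ?_
      rw [Finset.mul_sum]
      exact Finset.sum_le_sum fun j _ => hterm i j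
    rw [hQD]
    simp only
    nlinarith [hsum]
  -- constants
  set c : ℝ := K / (3 + ς) with hc
  have hcpos : 0 < c := by positivity
  set M : ℝ := K / (ς ^ 2) ^ γ with hM
  have hMpos : 0 < M := by
    have := Real.rpow_pos_of_pos (by positivity : (0:ℝ) < ς ^ 2) γ
    positivity
  -- Lyapunov bound for each ε > 0
  have main : ∀ ε > (0:ℝ), ∀ t ≥ (0:ℝ),
      Real.sqrt (Qf t + ε) + c * Real.log (1 + Pf t)
        ≤ Real.sqrt (Qf 0 + ε) + c * Real.log (1 + Pf 0) + M * Real.sqrt ε * t := by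
    intro ε hε t ht
    have hQεpos : ∀ s : ℝ, 0 < Qf s + ε := fun s => by linarith [hQnn s]
    have hPpos : ∀ s : ℝ, 0 < 1 + Pf s := fun s => by linarith [hPnn s]
    set φ : ℝ → ℝ := fun s => Real.sqrt (Qf s + ε) + c * Real.log (1 + Pf s) with hφ
    set D : ℝ → ℝ := fun s => QD s / (2 * Real.sqrt (Qf s + ε)) + c * (PD s / (1 + Pf s))
      with hD
    have hφ' : ∀ s, HasDerivAt φ (D s) s := by
      intro s
      have h1 : HasDerivAt (fun r => Qf r + ε) (QD s) s := (hQ' s).add_const ε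
      have h2 := h1.sqrt (ne_of_gt (hQεpos s))
      have h3 : HasDerivAt (fun r => 1 + Pf r) (PD s) s := (hP' s).const_add 1
      have h4 := h3.log (ne_of_gt (hPpos s))
      exact h2.add (h4.const_mul c)
    have hDle : ∀ s, D s ≤ M * Real.sqrt ε := by
      intro s
      rw [hD, hM, hc]
      exact cs_Dle K ς γ ε (Pf s) (Qf s) (QD s) (PD s) hK hς hγ0 hγ hε
        (hPnn s) (hQnn s) (hQDle s) (hPDle s)
    -- Gronwall: g r := M√ε r - φ r is monotone
    set A : ℝ := M * Real.sqrt ε with hA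
    have hg : ∀ s : ℝ, HasDerivAt (fun r => A * r - φ r) (A - D s) s := by
      intro s
      have h := ((hasDerivAt_id' s).const_mul A).sub (hφ' s); rwa [mul_one] at h
    have hmono : Monotone (fun r => A * r - φ r) := by
      apply monotone_of_deriv_nonneg
      · intro s
        exact (hg s).differentiableAt
      · intro s
        rw [(hg s).deriv]
        linarith [hDle s]
    have h0t : A * 0 - φ 0 ≤ A * t - φ t := hmono ht
    have hφt : φ t ≤ φ 0 + A * t := by
      simp only [mul_zero, zero_sub] at h0t
      linarith
    calc Real.sqrt (Qf t + ε) + c * Real.log (1 + Pf t) = φ t := rfl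
      _ ≤ φ 0 + A * t := hφt
      _ = Real.sqrt (Qf 0 + ε) + c * Real.log (1 + Pf 0) + M * Real.sqrt ε * t := by
          rw [hφ, hA]
  -- pass to the limit ε → 0
  have main0 : ∀ t ≥ (0:ℝ),
      c * Real.log (1 + Pf t) ≤ Real.sqrt (Qf 0) + c * Real.log (1 + Pf 0) := by
    intro t ht
    refine le_of_forall_pos_le_add fun δ hδ => ?_
    have hden : (0:ℝ) < 1 + M * t := by nlinarith [hMpos]
    set ε : ℝ := (δ / (1 + M * t)) ^ 2 with hε
    have hεpos : 0 < ε := by positivity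
    have hsε : Real.sqrt ε = δ / (1 + M * t) := by
      rw [hε, Real.sqrt_sq (by positivity)]
    have h := main ε hεpos t ht
    have hQ0 : Real.sqrt (Qf 0 + ε) ≤ Real.sqrt (Qf 0) + Real.sqrt ε := by
      have h1 : Qf 0 + ε ≤ (Real.sqrt (Qf 0) + Real.sqrt ε) ^ 2 := by
        have e1 := Real.sq_sqrt (hQnn 0)
        have e2 := Real.sq_sqrt hεpos.le
        nlinarith [Real.sqrt_nonneg (Qf 0), Real.sqrt_nonneg ε]
      calc Real.sqrt (Qf 0 + ε) ≤ Real.sqrt ((Real.sqrt (Qf 0) + Real.sqrt ε) ^ 2) :=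
            Real.sqrt_le_sqrt h1
        _ = Real.sqrt (Qf 0) + Real.sqrt ε := Real.sqrt_sq (by positivity)
    have hεδ : Real.sqrt ε + M * Real.sqrt ε * t = δ := by
      rw [hsε]
      field_simp
    have hsqnn : 0 ≤ Real.sqrt (Qf t + ε) := Real.sqrt_nonneg _
    linarith [h, hQ0, hsqnn]
  refine ⟨Real.exp ((Real.sqrt (Qf 0) + c * Real.log (1 + Pf 0)) / c), Real.exp_pos _, ?_⟩
  intro t ht
  have h1 := main0 t ht
  have hlog : Real.log (1 + Pf t) ≤ (Real.sqrt (Qf 0) + c * Real.log (1 + Pf 0)) / c := by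
    rw [le_div_iff₀ hcpos]
    linarith [h1]
  have h2 : 1 + Pf t ≤ Real.exp ((Real.sqrt (Qf 0) + c * Real.log (1 + Pf 0)) / c) := by
    have hpos : (0:ℝ) < 1 + Pf t := by linarith [hPnn t]
    calc 1 + Pf t = Real.exp (Real.log (1 + Pf t)) := (Real.exp_log hpos).symm
      _ ≤ _ := Real.exp_le_exp.mpr hlog
  have hsum : ∑ i, ∑ j ∈ Finset.univ \ {i}, ‖x i t - x j t‖ ^ 2 = Pf t := by
    refine Finset.sum_congr rfl fun i _ => ?_
    rw [show (Finset.univ \ {i} : Finset (Fin N)) = Finset.univ.erase i by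
      rw [Finset.erase_eq]]
    rw [Finset.sum_erase _ (by simp)]
    exact Finset.sum_congr rfl fun j _ => (real_inner_self_eq_norm_sq _).symm
  rw [hsum]
  linarith [hPnn t]
end

section
/- Consider the Cucker–Smale system of N individuals in ℝ^d: for i = 1,…,N, the trajectories x_i, v_i : ℝ → ℝ^d are differentiable and satisfy x_i'(t) = v_i(t) and v_i'(t) = (1/N) · Σ_{j=1}^N H(‖x_j(t) − x_i(t)‖) (v_j(t) − v_i(t)), where H(r) = K/(ς² + r²)^γ with K, ς > 0 and 0 ≤ γ ≤ 1/2. Define Λ(t) = (1/2) Σ_{i≠j} ‖v_i(t) − v_j(t)‖². Then Λ(t) converges to zero as t → ∞. -/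
open Filter Finset

local notation "⟪" x ", " y "⟫" => @inner ℝ _ _ x y

section aux
variable {E : Type*} [NormedAddCommGroup E] [InnerProductSpace ℝ E]

lemma cs_sum_antisym {N : ℕ} (H : Fin N → Fin N → ℝ) (hsym : ∀ i j, H i j = H j i)
    (v : Fin N → E) : ∑ i, ∑ k, H k i • (v k - v i) = (0 : E) := by
  set T : E := ∑ i, ∑ k, H k i • (v k - v i) with hT
  have h1 : T = -T := by
    calc T = ∑ i, ∑ k, H i k • (v i - v k) := Finset.sum_comm
    _ = ∑ i, ∑ k, H k i • (v i - v k) := by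
        refine Finset.sum_congr rfl fun i _ => Finset.sum_congr rfl fun k _ => by rw [hsym]
    _ = -T := by
        rw [hT, ← Finset.sum_neg_distrib]
        refine Finset.sum_congr rfl fun i _ => ?_
        rw [← Finset.sum_neg_distrib]
        refine Finset.sum_congr rfl fun k _ => by rw [← smul_neg, neg_sub]
  have h2 : T + T = 0 := by linear_combination (norm := module) h1
  have h3 : (2 : ℝ) • T = 0 := by rw [two_smul]; exact h2
  simpa using (smul_eq_zero.mp h3).resolve_left (by norm_num)

end aux

section aux2
variable {E : Type*} [NormedAddCommGroup E] [InnerProductSpace ℝ E]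

lemma cs_key_s1 {N : ℕ} (hN : 1 ≤ N) (H : Fin N → Fin N → ℝ) (hsym : ∀ i j, H i j = H j i)
    (v : Fin N → E) :
    ∑ i, ∑ j, ⟪v i - v j, ((N : ℝ)⁻¹ • ∑ k, H k i • (v k - v i))
        - ((N : ℝ)⁻¹ • ∑ k, H k j • (v k - v j))⟫
      = -∑ i, ∑ j, H i j * ‖v i - v j‖ ^ 2 := by
  have hNne : (N : ℝ) ≠ 0 := Nat.cast_ne_zero.mpr (by omega)
  set a : Fin N → E := fun i => (N : ℝ)⁻¹ • ∑ k, H k i • (v k - v i) with ha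
  set S : ℝ := ∑ i, ∑ j, ⟪v i - v j, a i⟫ with hS
  set U : ℝ := ∑ i, ∑ k, H k i * ⟪v i, v k - v i⟫ with hU
  -- Step 1: LHS = 2 * S
  have step1 : ∑ i, ∑ j, ⟪v i - v j, a i - a j⟫ = 2 * S := by
    have h2 : ∑ i, ∑ j, (⟪v i - v j, a j⟫ : ℝ) = -S := by
      calc ∑ i, ∑ j, (⟪v i - v j, a j⟫ : ℝ)
          = ∑ j, ∑ i, (⟪v i - v j, a j⟫ : ℝ) := Finset.sum_comm
        _ = ∑ i, ∑ j, (⟪v j - v i, a i⟫ : ℝ) := rfl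
        _ = -S := by
            rw [hS, ← Finset.sum_neg_distrib]
            refine Finset.sum_congr rfl fun i _ => ?_
            rw [← Finset.sum_neg_distrib]
            refine Finset.sum_congr rfl fun j _ => ?_
            rw [← inner_neg_left, neg_sub]
    calc ∑ i, ∑ j, (⟪v i - v j, a i - a j⟫ : ℝ)
        = ∑ i, ∑ j, ((⟪v i - v j, a i⟫ : ℝ) - ⟪v i - v j, a j⟫) := by
          simp [inner_sub_right]
      _ = S - ∑ i, ∑ j, (⟪v i - v j, a j⟫ : ℝ) := by
          rw [hS]; simp only [Finset.sum_sub_distrib]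
      _ = 2 * S := by rw [h2]; ring
  -- Step 2: S = U
  have step2 : S = U := by
    have hsum0 : ∑ i, a i = (0 : E) := by
      rw [ha, ← Finset.smul_sum, cs_sum_antisym H hsym v, smul_zero]
    calc S = ∑ i, (⟪∑ j, (v i - v j), a i⟫ : ℝ) := by
          rw [hS]; exact Finset.sum_congr rfl fun i _ => (sum_inner _ _ _).symm
      _ = ∑ i, (⟪(N : ℝ) • v i - ∑ j, v j, a i⟫ : ℝ) := by
          refine Finset.sum_congr rfl fun i _ => ?_
          congr 1
          rw [Finset.sum_sub_distrib, Finset.sum_const, Finset.card_univ, Fintype.card_fin,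
            ← Nat.cast_smul_eq_nsmul ℝ]
      _ = ∑ i, ((N : ℝ) * ⟪v i, a i⟫ - (⟪∑ j, v j, a i⟫ : ℝ)) := by
          refine Finset.sum_congr rfl fun i _ => ?_
          rw [inner_sub_left, real_inner_smul_left]
      _ = (∑ i, (N : ℝ) * ⟪v i, a i⟫) - ∑ i, (⟪∑ j, v j, a i⟫ : ℝ) := Finset.sum_sub_distrib _ _
      _ = ∑ i, (N : ℝ) * ⟪v i, a i⟫ := by
          rw [← inner_sum, hsum0, inner_zero_right, sub_zero]
      _ = U := by
          rw [hU]
          refine Finset.sum_congr rfl fun i _ => ?_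
          rw [ha]
          simp only [inner_smul_right, inner_sum, real_inner_smul_right]
          rw [← mul_assoc, mul_inv_cancel₀ hNne, one_mul]
  -- Step 3: 2 * U = -∑ H ‖·‖²
  have step3 : 2 * U = -∑ i, ∑ j, H i j * ‖v i - v j‖ ^ 2 := by
    have hU2 : U = ∑ i, ∑ k, H k i * ⟪v k, v i - v k⟫ := by
      calc U = ∑ k, ∑ i, H k i * ⟪v i, v k - v i⟫ := by rw [hU]; exact Finset.sum_comm
        _ = ∑ i, ∑ k, H i k * ⟪v k, v i - v k⟫ := rfl
        _ = ∑ i, ∑ k, H k i * ⟪v k, v i - v k⟫ := by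
            refine Finset.sum_congr rfl fun i _ => Finset.sum_congr rfl fun k _ => by rw [hsym]
    calc 2 * U = U + U := by ring
      _ = ∑ i, ∑ k, (H k i * ⟪v i, v k - v i⟫ + H k i * ⟪v k, v i - v k⟫) := by
          rw [show U + U = (∑ i, ∑ k, H k i * ⟪v i, v k - v i⟫)
              + ∑ i, ∑ k, H k i * ⟪v k, v i - v k⟫ from by rw [← hU, ← hU2]]
          simp only [← Finset.sum_add_distrib]
      _ = -∑ i, ∑ j, H i j * ‖v i - v j‖ ^ 2 := by
          rw [← Finset.sum_neg_distrib]
          refine Finset.sum_congr rfl fun i _ => ?_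
          rw [← Finset.sum_neg_distrib]
          refine Finset.sum_congr rfl fun k _ => ?_
          have : (⟪v i, v k - v i⟫ : ℝ) + ⟪v k, v i - v k⟫ = -‖v i - v k‖ ^ 2 := by
            have h := real_inner_self_eq_norm_sq (v i - v k)
            simp only [inner_sub_left, inner_sub_right] at h ⊢
            rw [real_inner_comm (v k) (v i)] at h
            linarith [real_inner_comm (v i) (v k)]
          rw [hsym]
          linear_combination (H i k) * this
  calc ∑ i, ∑ j, ⟪v i - v j, a i - a j⟫ = 2 * S := step1
    _ = 2 * U := by rw [step2]
    _ = -∑ i, ∑ j, H i j * ‖v i - v j‖ ^ 2 := step3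

end aux2


lemma cs_scalar_id_s1 (a b C D : ℝ) (hC : C ≠ 0) (hD : D ≠ 0) :
    a * b / C * (C / D) = a * (b / D) := by
  field_simp

set_option maxHeartbeats 1600000 in
/-- Cucker–Smale with `H(r) = K / (ς² + r²)^γ`, `0 ≤ γ ≤ 1/2`: the velocity spread
`Λ(t) = (1/2) ∑_{i≠j} ‖v_i(t) − v_j(t)‖²` converges to zero as `t → ∞`. -/
theorem cucker_smale_velocity_spread_tendsto_zero
    {d N : ℕ} (hN : 1 ≤ N) (K ς γ : ℝ) (hK : 0 < K) (hς : 0 < ς)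
    (hγ0 : 0 ≤ γ) (hγ : γ ≤ 1 / 2)
    (x v : Fin N → ℝ → EuclideanSpace ℝ (Fin d))
    (hx : ∀ i t, HasDerivAt (x i) (v i t) t)
    (hv : ∀ i t, HasDerivAt (v i)
      ((N : ℝ)⁻¹ • ∑ j, (K / (ς ^ 2 + ‖x j t - x i t‖ ^ 2) ^ γ) • (v j t - v i t)) t) :
    Filter.Tendsto
      (fun t : ℝ => (1 / 2 : ℝ) * ∑ i, ∑ j ∈ Finset.univ \ {i}, ‖v i t - v j t‖ ^ 2)
      Filter.atTop (nhds 0) := by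
  classical
  set Λ : ℝ → ℝ := fun t => (1 / 2 : ℝ) * ∑ i, ∑ j, ‖v i t - v j t‖ ^ 2 with hΛdef
  have hfun : (fun t : ℝ => (1 / 2 : ℝ) * ∑ i, ∑ j ∈ Finset.univ \ {i}, ‖v i t - v j t‖ ^ 2)
      = Λ := by
    funext t
    rw [hΛdef]
    congr 1
    refine Finset.sum_congr rfl fun i _ => ?_
    rw [Finset.sum_sdiff_eq_sub (Finset.subset_univ _), Finset.sum_singleton]
    simp
  rw [hfun]
  set Hc : ℝ → Fin N → Fin N → ℝ := fun t i j => K / (ς ^ 2 + ‖x i t - x j t‖ ^ 2) ^ γ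
    with hHcdef
  have hHcsym : ∀ t, ∀ i j : Fin N, Hc t i j = Hc t j i := by
    intro t i j; rw [hHcdef]; simp only [norm_sub_rev]
  have hHcpos : ∀ t, ∀ i j : Fin N, 0 < Hc t i j := by
    intro t i j
    exact div_pos hK (Real.rpow_pos_of_pos (by positivity) γ)
  set Λ' : ℝ → ℝ := fun t => -∑ i, ∑ j, Hc t i j * ‖v i t - v j t‖ ^ 2 with hΛ'def
  have hderiv : ∀ t, HasDerivAt Λ (Λ' t) t := by
    intro t
    have hw : ∀ i j : Fin N, HasDerivAt (fun s => v i s - v j s)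
        (((N : ℝ)⁻¹ • ∑ k, (K / (ς ^ 2 + ‖x k t - x i t‖ ^ 2) ^ γ) • (v k t - v i t))
          - ((N : ℝ)⁻¹ • ∑ k, (K / (ς ^ 2 + ‖x k t - x j t‖ ^ 2) ^ γ) • (v k t - v j t))) t :=
      fun i j => (hv i t).sub (hv j t)
    have hsq : ∀ i j : Fin N, HasDerivAt (fun s => ‖v i s - v j s‖ ^ 2)
        (2 * (inner (𝕜 := ℝ) (v i t - v j t)
          (((N : ℝ)⁻¹ • ∑ k, (K / (ς ^ 2 + ‖x k t - x i t‖ ^ 2) ^ γ) • (v k t - v i t))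
          - ((N : ℝ)⁻¹ • ∑ k, (K / (ς ^ 2 + ‖x k t - x j t‖ ^ 2) ^ γ) • (v k t - v j t))))) t := by
      intro i j
      have h1 := HasDerivAt.inner ℝ (hw i j) (hw i j)
      have h2 : (fun s => inner (𝕜 := ℝ) (v i s - v j s) (v i s - v j s))
          = fun s => ‖v i s - v j s‖ ^ 2 := funext fun s => real_inner_self_eq_norm_sq _
      rw [h2] at h1
      refine h1.congr_deriv ?_
      rw [real_inner_comm]; ring
    have hsum : HasDerivAt (fun s => ∑ i, ∑ j, ‖v i s - v j s‖ ^ 2)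
        (∑ i, ∑ j, 2 * (inner (𝕜 := ℝ) (v i t - v j t)
          (((N : ℝ)⁻¹ • ∑ k, (K / (ς ^ 2 + ‖x k t - x i t‖ ^ 2) ^ γ) • (v k t - v i t))
          - ((N : ℝ)⁻¹ • ∑ k, (K / (ς ^ 2 + ‖x k t - x j t‖ ^ 2) ^ γ) • (v k t - v j t))))) t :=
      HasDerivAt.fun_sum fun i _ => HasDerivAt.fun_sum fun j _ => hsq i j
    have hΛd := hsum.const_mul (1 / 2 : ℝ)
    have hval : (1 / 2 : ℝ) * ∑ i, ∑ j, 2 * (inner (𝕜 := ℝ) (v i t - v j t)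
          (((N : ℝ)⁻¹ • ∑ k, (K / (ς ^ 2 + ‖x k t - x i t‖ ^ 2) ^ γ) • (v k t - v i t))
          - ((N : ℝ)⁻¹ • ∑ k, (K / (ς ^ 2 + ‖x k t - x j t‖ ^ 2) ^ γ) • (v k t - v j t))))
        = Λ' t := by
      have key := cs_key_s1 (E := EuclideanSpace ℝ (Fin d)) hN
        (fun p q => K / (ς ^ 2 + ‖x p t - x q t‖ ^ 2) ^ γ)
        (fun p q => by simp only [norm_sub_rev]) (fun i => v i t)
      rw [hΛ'def]
      simp only [Finset.mul_sum]
      calc ∑ i, ∑ j, (1/2 : ℝ) * (2 * (inner (𝕜 := ℝ) (v i t - v j t)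
            (((N : ℝ)⁻¹ • ∑ k, (K / (ς ^ 2 + ‖x k t - x i t‖ ^ 2) ^ γ) • (v k t - v i t))
            - ((N : ℝ)⁻¹ • ∑ k, (K / (ς ^ 2 + ‖x k t - x j t‖ ^ 2) ^ γ) • (v k t - v j t)))))
          = ∑ i, ∑ j, (inner (𝕜 := ℝ) (v i t - v j t)
            (((N : ℝ)⁻¹ • ∑ k, (K / (ς ^ 2 + ‖x k t - x i t‖ ^ 2) ^ γ) • (v k t - v i t))
            - ((N : ℝ)⁻¹ • ∑ k, (K / (ς ^ 2 + ‖x k t - x j t‖ ^ 2) ^ γ) • (v k t - v j t)))) := by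
            refine Finset.sum_congr rfl fun i _ => Finset.sum_congr rfl fun j _ => by ring
        _ = -∑ i, ∑ j, (K / (ς ^ 2 + ‖x i t - x j t‖ ^ 2) ^ γ) * ‖v i t - v j t‖ ^ 2 := key
        _ = -∑ i, ∑ j, Hc t i j * ‖v i t - v j t‖ ^ 2 := rfl
    exact hval ▸ hΛd
  have hΛ'nonpos : ∀ t, Λ' t ≤ 0 := by
    intro t
    rw [hΛ'def]
    simp only [neg_nonpos]
    refine Finset.sum_nonneg fun i _ => Finset.sum_nonneg fun j _ =>
      mul_nonneg (hHcpos t i j).le (by positivity)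
  have hanti : Antitone Λ :=
    antitone_of_deriv_nonpos (fun t => (hderiv t).differentiableAt)
      (fun t => by rw [(hderiv t).deriv]; exact hΛ'nonpos t)
  have hΛ0 : ∀ t, 0 ≤ Λ t := by
    intro t; rw [hΛdef]; positivity
  have hbdd : BddBelow (Set.range Λ) := ⟨0, by rintro y ⟨t, rfl⟩; exact hΛ0 t⟩
  have hL : Tendsto Λ atTop (nhds (⨅ t, Λ t)) := tendsto_atTop_ciInf hanti hbdd
  set L : ℝ := ⨅ t, Λ t with hLdef
  have hL0 : 0 ≤ L := le_ciInf hΛ0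
  have hLle : ∀ t, L ≤ Λ t := fun t => ciInf_le hbdd t
  suffices hLz : L = 0 by rw [← hLz]; exact hL
  by_contra hne
  have hLpos : 0 < L := hL0.lt_of_ne (Ne.symm hne)
  -- velocity bounds
  have hvb : ∀ (i j : Fin N) (t : ℝ), ‖v i t - v j t‖ ^ 2 ≤ 2 * Λ t := by
    intro i j t
    have h1 : ‖v i t - v j t‖ ^ 2 ≤ ∑ j', ‖v i t - v j' t‖ ^ 2 :=
      Finset.single_le_sum (f := fun j' => ‖v i t - v j' t‖ ^ 2)
        (fun k _ => by positivity) (Finset.mem_univ j)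
    have h2 : (∑ j', ‖v i t - v j' t‖ ^ 2) ≤ ∑ i', ∑ j', ‖v i' t - v j' t‖ ^ 2 :=
      Finset.single_le_sum (f := fun i' => ∑ j', ‖v i' t - v j' t‖ ^ 2)
        (fun k _ => by positivity) (Finset.mem_univ i)
    have : Λ t = (1/2 : ℝ) * ∑ i', ∑ j', ‖v i' t - v j' t‖ ^ 2 := rfl
    linarith
  set C1 : ℝ := Real.sqrt (2 * Λ 0) with hC1def
  have hC1nn : 0 ≤ C1 := Real.sqrt_nonneg _
  have hvnorm : ∀ (i j : Fin N), ∀ t ∈ Set.Ici (0 : ℝ), ‖v i t - v j t‖ ≤ C1 := by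
    intro i j t ht
    have h1 : ‖v i t - v j t‖ ^ 2 ≤ 2 * Λ 0 := (hvb i j t).trans (by linarith [hanti ht])
    rw [hC1def]
    exact (Real.le_sqrt (norm_nonneg _) (by linarith [hΛ0 0])).mpr h1
  set C0 : ℝ := ∑ i, ∑ j, ‖x i 0 - x j (0 : ℝ)‖ with hC0def
  have hC0nn : 0 ≤ C0 := by rw [hC0def]; positivity
  have hxb : ∀ (i j : Fin N), ∀ t ∈ Set.Ici (0 : ℝ), ‖x i t - x j t‖ ≤ C0 + C1 * t := by
    intro i j t ht
    have key := Convex.norm_image_sub_le_of_norm_hasDerivWithin_le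
      (f := fun s => x i s - x j s) (f' := fun s => v i s - v j s) (s := Set.Ici (0:ℝ))
      (fun s hs => ((hx i s).sub (hx j s)).hasDerivWithinAt)
      (fun s hs => hvnorm i j s hs) (convex_Ici 0) Set.self_mem_Ici ht
    have ht0 : (0:ℝ) ≤ t := ht
    rw [sub_zero, Real.norm_eq_abs, abs_of_nonneg ht0] at key
    have h0 : ‖x i 0 - x j (0:ℝ)‖ ≤ C0 := by
      rw [hC0def]
      have h1 : ‖x i 0 - x j (0:ℝ)‖ ≤ ∑ j', ‖x i 0 - x j' (0:ℝ)‖ :=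
        Finset.single_le_sum (f := fun j' => ‖x i 0 - x j' (0:ℝ)‖)
          (fun k _ => norm_nonneg _) (Finset.mem_univ j)
      have h2 : (∑ j', ‖x i 0 - x j' (0:ℝ)‖) ≤ ∑ i', ∑ j', ‖x i' 0 - x j' (0:ℝ)‖ :=
        Finset.single_le_sum (f := fun i' => ∑ j', ‖x i' 0 - x j' (0:ℝ)‖)
          (fun k _ => by positivity) (Finset.mem_univ i)
      linarith
    calc ‖x i t - x j t‖
        ≤ ‖x i 0 - x j (0:ℝ)‖ + ‖x i t - x j t - (x i 0 - x j (0:ℝ))‖ := by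
          have := norm_add_le (x i 0 - x j (0:ℝ)) (x i t - x j t - (x i 0 - x j (0:ℝ)))
          simpa using this
      _ ≤ C0 + C1 * t := add_le_add h0 key
  set g : ℝ → ℝ := fun t => K / (1 + ς + C0 + C1 * t) with hgdef
  have hcpos : ∀ t : ℝ, 0 ≤ t → 0 < 1 + ς + C0 + C1 * t := by
    intro t ht; nlinarith
  have hgpos : ∀ t : ℝ, 0 ≤ t → 0 < g t := fun t ht => div_pos hK (hcpos t ht)
  have hHg : ∀ t ∈ Set.Ici (0 : ℝ), ∀ i j : Fin N, g t ≤ Hc t i j := by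
    intro t ht i j
    have ht0 : (0:ℝ) ≤ t := ht
    have hr := hxb i j t ht
    have hM : 0 < ς + C0 + C1 * t := by nlinarith
    have hbase : ς ^ 2 + ‖x i t - x j t‖ ^ 2 ≤ (ς + C0 + C1 * t) ^ 2 := by
      nlinarith [norm_nonneg (x i t - x j t)]
    have hpow : (ς ^ 2 + ‖x i t - x j t‖ ^ 2) ^ γ ≤ 1 + ς + C0 + C1 * t := by
      calc (ς ^ 2 + ‖x i t - x j t‖ ^ 2) ^ γ
          ≤ ((ς + C0 + C1 * t) ^ 2) ^ γ := by
            apply Real.rpow_le_rpow (by positivity) hbase hγ0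
        _ = (ς + C0 + C1 * t) ^ (2 * γ) := by
            rw [← Real.rpow_natCast (ς + C0 + C1 * t) 2, ← Real.rpow_mul hM.le]
            norm_num
        _ ≤ 1 + ς + C0 + C1 * t := by
            rcases le_total (ς + C0 + C1 * t) 1 with h1 | h1
            · have := Real.rpow_le_one (z := 2*γ) hM.le h1 (by linarith)
              linarith
            · have h2 : (ς + C0 + C1 * t) ^ (2*γ) ≤ (ς + C0 + C1 * t) ^ (1:ℝ) :=
                Real.rpow_le_rpow_of_exponent_le h1 (by linarith)
              rw [Real.rpow_one] at h2
              linarith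
    rw [hgdef, hHcdef]
    exact div_le_div_of_nonneg_left hK.le
      (Real.rpow_pos_of_pos (by positivity) γ) hpow
  have hdis : ∀ t ∈ Set.Ici (0:ℝ), Λ' t ≤ -(2 * L * g t) := by
    intro t ht
    have h1 : ∑ i, ∑ j, g t * ‖v i t - v j t‖ ^ 2
        ≤ ∑ i, ∑ j, Hc t i j * ‖v i t - v j t‖ ^ 2 :=
      Finset.sum_le_sum fun i _ => Finset.sum_le_sum fun j _ =>
        mul_le_mul_of_nonneg_right (hHg t ht i j) (by positivity)
    have h2 : ∑ i, ∑ j, g t * ‖v i t - v j t‖ ^ 2 = g t * (2 * Λ t) := by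
      simp only [← Finset.mul_sum]
      have h3 : Λ t = (1/2:ℝ) * ∑ i, ∑ j, ‖v i t - v j t‖ ^ 2 := rfl
      rw [h3]; ring
    have hgL : 2 * L * g t ≤ g t * (2 * Λ t) := by
      nlinarith [hgpos t ht, hLle t]
    have h4 : Λ' t = -∑ i, ∑ j, Hc t i j * ‖v i t - v j t‖ ^ 2 := rfl
    linarith
  have hC1pos : 0 < C1 := by
    rw [hC1def]
    apply Real.sqrt_pos.mpr
    have := hLle 0
    linarith
  set ψ : ℝ → ℝ := fun t => Λ t + (2 * L * K / C1) * Real.log (1 + ς + C0 + C1 * t) with hψdef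
  have hψderiv : ∀ t ∈ Set.Ioi (0:ℝ), HasDerivAt ψ (Λ' t + 2 * L * g t) t := by
    intro t ht
    have ht0 : (0:ℝ) ≤ t := le_of_lt ht
    have hlin : HasDerivAt (fun s : ℝ => 1 + ς + C0 + C1 * s) C1 t := by
      simpa using ((hasDerivAt_id t).const_mul C1).const_add (1 + ς + C0)
    have hlog : HasDerivAt (fun s : ℝ => Real.log (1 + ς + C0 + C1 * s))
        (C1 / (1 + ς + C0 + C1 * t)) t := hlin.log (ne_of_gt (hcpos t ht0))
    have hval2 : 2 * L * K / C1 * (C1 / (1 + ς + C0 + C1 * t)) = 2 * L * g t := by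
      have hD : (1 + ς + C0 + C1 * t) ≠ 0 := ne_of_gt (hcpos t ht0)
      have hgt : g t = K / (1 + ς + C0 + C1 * t) := rfl
      rw [hgt]
      exact cs_scalar_id_s1 (2*L) K C1 (1 + ς + C0 + C1 * t) (ne_of_gt hC1pos) hD
    have hψ' : HasDerivAt (fun s : ℝ => Λ s + 2 * L * K / C1 * Real.log (1 + ς + C0 + C1 * s))
        (Λ' t + 2 * L * g t) t := by
      rw [← hval2]
      exact (hderiv t).add (hlog.const_mul (2 * L * K / C1))
    rw [hψdef]
    exact hψ'
  have hψanti : AntitoneOn ψ (Set.Ici (0:ℝ)) := by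
    apply antitoneOn_of_deriv_nonpos (convex_Ici 0)
    · apply ContinuousOn.add
      · exact (Continuous.continuousOn (by
          exact continuous_iff_continuousAt.mpr fun t =>
            (hderiv t).differentiableAt.continuousAt))
      · apply ContinuousOn.mul continuousOn_const
        apply ContinuousOn.log
        · exact (continuous_const.add (continuous_const.mul continuous_id)).continuousOn
        · intro t ht
          exact ne_of_gt (hcpos t ht)
    · rw [interior_Ici]
      exact fun t ht => ((hψderiv t ht).differentiableAt).differentiableWithinAt
    · intro t ht
      rw [interior_Ici] at ht
      rw [(hψderiv t ht).deriv]
      have := hdis t (Set.Ioi_subset_Ici_self ht)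
      linarith
  have hlogtend : Tendsto (fun t : ℝ => Real.log (1 + ς + C0 + C1 * t)) atTop atTop := by
    apply Real.tendsto_log_atTop.comp
    apply tendsto_atTop_add_const_left
    exact Tendsto.const_mul_atTop hC1pos tendsto_id
  have coeffpos : 0 < 2 * L * K / C1 := by positivity
  have htend2 : Tendsto (fun t : ℝ => (2 * L * K / C1) * Real.log (1 + ς + C0 + C1 * t))
      atTop atTop := Tendsto.const_mul_atTop coeffpos hlogtend
  have hev := (htend2.eventually_gt_atTop (ψ 0 - L)).and (eventually_ge_atTop (0:ℝ))
  obtain ⟨t, h1, h2⟩ := hev.exists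
  have h3 : ψ t ≤ ψ 0 := hψanti Set.self_mem_Ici h2 h2
  have h4 : ψ t = Λ t + (2 * L * K / C1) * Real.log (1 + ς + C0 + C1 * t) := rfl
  have h5 := hLle t
  have h1' : ψ 0 - L < 2 * L * K / C1 * Real.log (1 + ς + C0 + C1 * t) := h1
  clear_value ψ g Λ' Hc Λ
  clear_value L C0 C1
  linarith
end

section
/- Let N ≥ 1 and let x_i, v_i : [0, ∞) → ℝ^d (i = 1,…,N) be differentiable and satisfy the Cucker–Smale system x_i'(t) = v_i(t), v_i'(t) = (1/N) Σ_{j=1}^N H(‖x_j(t) − x_i(t)‖)(v_j(t) − v_i(t)), where H : ℝ → ℝ is nonnegative. Then for every i and every t ≥ 0, ‖v_i(t)‖ ≤ max_{1 ≤ j ≤ N} ‖v_j(0)‖; i.e., the velocity support remains inside the ball determined by the initial data. -/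
open Finset

/-- Along any solution of the Cucker–Smale system with nonnegative communication
rate `H`, every speed stays bounded by the largest initial speed. -/
theorem cucker_smale_velocity_support_bounded
    {d N : ℕ} (hN : 1 ≤ N) (H : ℝ → ℝ) (hH : ∀ r, 0 ≤ H r)
    (x v : Fin N → ℝ → EuclideanSpace ℝ (Fin d))
    (hx : ∀ i t, 0 ≤ t → HasDerivAt (x i) (v i t) t)
    (hv : ∀ i t, 0 ≤ t → HasDerivAt (v i)
      ((N : ℝ)⁻¹ • ∑ j, H ‖x j t - x i t‖ • (v j t - v i t)) t) :
    ∀ i, ∀ t : ℝ, 0 ≤ t → ‖v i t‖ ≤ ⨆ j, ‖v j 0‖ := by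
  have hne : Nonempty (Fin N) := ⟨⟨0, hN⟩⟩
  have hune : (univ : Finset (Fin N)).Nonempty := univ_nonempty
  set R := ⨆ j, ‖v j 0‖ with hRdef
  have hbdd : BddAbove (Set.range fun j => ‖v j 0‖) := (Set.finite_range _).bddAbove
  have hR : ∀ j, ‖v j 0‖ ≤ R := fun j => le_ciSup hbdd j
  have hRnn : 0 ≤ R := (norm_nonneg _).trans (hR hne.some)
  -- the squared-speed functions and their pointwise max
  set g : Fin N → ℝ → ℝ := fun j s => ‖v j s‖ ^ 2 with hgdef
  set f : ℝ → ℝ := fun s => univ.sup' hune fun j => g j s with hfdef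
  -- derivative of g j
  have hg' : ∀ j s, 0 ≤ s →
      HasDerivAt (g j)
        (2 * inner ℝ ((N : ℝ)⁻¹ • ∑ k, H ‖x k s - x j s‖ • (v k s - v j s)) (v j s)) s := by
    intro j s hs
    have h1 := (hv j s hs).inner (𝕜 := ℝ) (hv j s hs)
    have h2 : (fun t => (inner ℝ (v j t) (v j t) : ℝ)) = g j := by
      funext t
      show (inner ℝ (v j t) (v j t) : ℝ) = ‖v j t‖ ^ 2
      exact real_inner_self_eq_norm_sq _
    rw [h2] at h1
    refine h1.congr_deriv ?_
    rw [real_inner_comm]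
    ring
  -- the key dissipativity bound for a maximizer
  have key : ∀ j s, 0 ≤ s → (∀ k, ‖v k s‖ ≤ ‖v j s‖) →
      (2 * inner ℝ ((N : ℝ)⁻¹ • ∑ k, H ‖x k s - x j s‖ • (v k s - v j s)) (v j s) : ℝ) ≤ 0 := by
    intro j s _ hmax
    have : (inner ℝ ((N : ℝ)⁻¹ • ∑ k, H ‖x k s - x j s‖ • (v k s - v j s)) (v j s) : ℝ) ≤ 0 := by
      rw [inner_smul_left, sum_inner]
      have hsum : (∑ k, (inner ℝ (H ‖x k s - x j s‖ • (v k s - v j s)) (v j s) : ℝ)) ≤ 0 := by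
        apply Finset.sum_nonpos
        intro k _
        rw [inner_smul_left]
        have h1 : (inner ℝ (v k s - v j s) (v j s) : ℝ) ≤ 0 := by
          rw [inner_sub_left, real_inner_self_eq_norm_sq]
          have := real_inner_le_norm (v k s) (v j s)
          nlinarith [hmax k, norm_nonneg (v j s), norm_nonneg (v k s)]
        have := hH ‖x k s - x j s‖
        simp only [RCLike.star_def, conj_trivial]
        nlinarith
      have hNinv : (0 : ℝ) ≤ (N : ℝ)⁻¹ := by positivity
      simp only [RCLike.star_def, conj_trivial]
      nlinarith
    linarith
  -- main estimate: f s ≤ R^2 on [0, t]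
  intro i t ht
  have main : ∀ s ∈ Set.Icc (0 : ℝ) t, f s ≤ R ^ 2 := by
    have hfc : ContinuousOn f (Set.Icc 0 t) := by
      rw [hfdef]
      apply ContinuousOn.finset_sup'_apply hune
      intro j _ s hs
      exact ((hg' j s hs.1).continuousAt).continuousWithinAt
    have ha : f 0 ≤ R ^ 2 := by
      apply Finset.sup'_le
      intro j _
      have h1 : ‖v j 0‖ ≤ R := hR j
      have h2 := norm_nonneg (v j 0)
      show ‖v j 0‖ ^ 2 ≤ R ^ 2
      nlinarith
    have hB : ContinuousOn (fun _ : ℝ => R ^ 2) (Set.Icc 0 t) := continuousOn_const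
    have hB' : ∀ s ∈ Set.Ico (0 : ℝ) t,
        HasDerivWithinAt (fun _ : ℝ => R ^ 2) ((fun _ => (0 : ℝ)) s) (Set.Ici s) s :=
      fun s _ => (hasDerivAt_const s _).hasDerivWithinAt
    refine image_le_of_liminf_slope_right_le_deriv_boundary hfc ha hB hB' ?_
    intro s hs r hr
    -- choose a maximizer j at s
    obtain ⟨j, _, hj⟩ := Finset.exists_mem_eq_sup' hune fun k => g k s
    have hjmax : ∀ k, g k s ≤ g j s := by
      intro k
      rw [← hj]
      exact Finset.le_sup' (fun k => g k s) (mem_univ k)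
    have hjnorm : ∀ k, ‖v k s‖ ≤ ‖v j s‖ := by
      intro k
      have := hjmax k
      simp only [hgdef] at this
      nlinarith [norm_nonneg (v k s), norm_nonneg (v j s)]
    -- show eventually (∀ k, g k z < f s + r * (z - s)), hence slope f s z < r
    have hev : ∀ᶠ z in nhdsWithin s (Set.Ioi s), slope f s z < r := by
      have hall : ∀ k : Fin N, ∀ᶠ z in nhdsWithin s (Set.Ioi s),
          g k z < f s + r * (z - s) := by
        intro k
        by_cases hk : g k s = f s
        · -- k is also a maximizer; use the derivative bound
          have hkmax : ∀ l, ‖v l s‖ ≤ ‖v k s‖ := by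
            intro l
            have h1 : g l s ≤ g k s := by
              rw [hk, hfdef]; exact Finset.le_sup' (fun k => g k s) (mem_univ l)
            simp only [hgdef] at h1
            nlinarith [norm_nonneg (v l s), norm_nonneg (v k s)]
          have hder := hg' k s hs.1
          have hslope : Filter.Tendsto (slope (g k) s) (nhdsWithin s (Set.Ioi s))
              (nhds (2 * inner ℝ ((N : ℝ)⁻¹ • ∑ l, H ‖x l s - x k s‖ • (v l s - v k s)) (v k s))) := by
            have := hasDerivAt_iff_tendsto_slope.1 hder
            exact this.mono_left (nhdsWithin_mono s (by intro z hz; exact ne_of_gt hz))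
          have hlt := key k s hs.1 hkmax
          have hev2 : ∀ᶠ z in nhdsWithin s (Set.Ioi s), slope (g k) s z < r :=
            hslope.eventually_lt_const (lt_of_le_of_lt hlt hr)
          filter_upwards [hev2, self_mem_nhdsWithin] with z hz hz2
          have hzs : 0 < z - s := sub_pos.2 hz2
          rw [slope_def_field, div_lt_iff₀ hzs] at hz
          have : g k z < g k s + r * (z - s) := by linarith
          calc g k z < g k s + r * (z - s) := this
            _ ≤ f s + r * (z - s) := by
                have : g k s ≤ f s := by
                  rw [hfdef]; exact Finset.le_sup' (fun k => g k s) (mem_univ k)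
                linarith
        · -- g k s < f s : use continuity
          have hkle : g k s ≤ f s := by
            rw [hfdef]; exact Finset.le_sup' (fun k => g k s) (mem_univ k)
          have hklt : g k s < f s := lt_of_le_of_ne hkle hk
          have hc : Filter.Tendsto (g k) (nhdsWithin s (Set.Ioi s)) (nhds (g k s)) :=
            ((hg' k s hs.1).continuousAt).continuousWithinAt
          have hev2 : ∀ᶠ z in nhdsWithin s (Set.Ioi s), g k z < f s :=
            hc.eventually_lt_const hklt
          filter_upwards [hev2, self_mem_nhdsWithin] with z hz hz2
          have hzs : 0 < z - s := sub_pos.2 hz2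
          have hrpos : 0 < r := hr
          nlinarith
      have hcomb : ∀ᶠ z in nhdsWithin s (Set.Ioi s),
          ∀ k : Fin N, g k z < f s + r * (z - s) := Filter.eventually_all.2 hall
      filter_upwards [hcomb, self_mem_nhdsWithin] with z hz hz2
      have hzs : 0 < z - s := sub_pos.2 hz2
      have hfz : f z < f s + r * (z - s) := by
        rw [hfdef]
        apply (Finset.sup'_lt_iff hune).2
        intro k _
        exact hz k
      rw [slope_def_field, div_lt_iff₀ hzs]
      linarith
    exact hev.frequently
  -- conclude
  have h1 : ‖v i t‖ ^ 2 ≤ R ^ 2 := by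
    have h2 : g i t ≤ f t := by
      rw [hfdef]; exact Finset.le_sup' (fun k => g k t) (mem_univ i)
    have h3 := main t ⟨ht, le_refl t⟩
    simpa only [hgdef] using h2.trans h3
  nlinarith [norm_nonneg (v i t)]
end

section
/- Let a, b > 0 and let v : [0, ∞) → ℝ^d be a differentiable solution of the self-propulsion/friction equation v'(t) = (a − b‖v(t)‖²) v(t) with v(0) ≠ 0. Then ‖v(t)‖ → √(a/b) as t → ∞. -/
open Filter

/-- Solution formula for the Bernoulli substitution: as long as `u` stays positive,
`1/u` solves the linear ODE explicitly. -/
lemma self_prop_aux_formula (a b : ℝ) (ha : 0 < a) (u : ℝ → ℝ)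
    (hu' : ∀ t, 0 ≤ t → HasDerivAt u (2 * (a - b * u t) * u t) t)
    (T : ℝ) (hpos : ∀ s ∈ Set.Icc (0:ℝ) T, 0 < u s) :
    ∀ s ∈ Set.Icc (0:ℝ) T,
      (u s)⁻¹ = b / a + ((u 0)⁻¹ - b / a) * Real.exp (-(2 * a * s)) := by
  set g : ℝ → ℝ := fun s => ((u s)⁻¹ - b / a) * Real.exp (2 * a * s) with hg
  have hgd : ∀ s ∈ Set.Ico (0:ℝ) T, HasDerivAt g 0 s := by
    intro s hs
    have hus : 0 < u s := hpos s ⟨hs.1, hs.2.le⟩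
    have h1 : HasDerivAt (fun t => (u t)⁻¹ - b / a)
        (-(2 * (a - b * u s) * u s) / (u s) ^ 2) s :=
      ((hu' s hs.1).inv hus.ne').sub_const _
    have h2 : HasDerivAt (fun t : ℝ => Real.exp (2 * a * t))
        (Real.exp (2 * a * s) * (2 * a)) s := by
      have := (((hasDerivAt_id s).const_mul (2 * a)).exp)
      simpa using this
    have h3 := h1.mul h2
    refine h3.congr_deriv ?_
    have he : Real.exp (2 * a * s) ≠ 0 := (Real.exp_pos _).ne'
    field_simp
    ring
  have hcont : ContinuousOn g (Set.Icc 0 T) := by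
    intro s hs
    exact ((((hu' s hs.1).continuousAt.inv₀ (hpos s hs).ne').sub continuousAt_const).mul
      (Real.continuous_exp.comp (continuous_const.mul continuous_id)).continuousAt).continuousWithinAt
  have hconst := constant_of_has_deriv_right_zero hcont
    (fun x hx => (hgd x hx).hasDerivWithinAt)
  intro s hs
  have h0 := hconst s hs
  have he : Real.exp (2 * a * s) ≠ 0 := (Real.exp_pos _).ne'
  have h00 : g 0 = (u 0)⁻¹ - b / a := by simp [hg]
  rw [h00] at h0
  simp only [hg] at h0
  have hkey : (u s)⁻¹ - b / a = ((u 0)⁻¹ - b / a) * (Real.exp (2 * a * s))⁻¹ := by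
    rw [← h0]; field_simp
  rw [Real.exp_neg]
  linarith [hkey]

/-- Self-propulsion/friction: any nonzero solution of `v' = (a − b‖v‖²) v` with
`a, b > 0` has speed converging to `√(a/b)`. -/
theorem self_propulsion_speed_limit
    {d : ℕ} (a b : ℝ) (ha : 0 < a) (hb : 0 < b)
    (v : ℝ → EuclideanSpace ℝ (Fin d))
    (hv : ∀ t : ℝ, 0 ≤ t → HasDerivAt v ((a - b * ‖v t‖ ^ 2) • v t) t)
    (hv0 : v 0 ≠ 0) :
    Filter.Tendsto (fun t : ℝ => ‖v t‖) Filter.atTop (nhds (Real.sqrt (a / b))) := by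
  set u : ℝ → ℝ := fun t => ‖v t‖ ^ 2 with hu_def
  have hu0 : 0 < u 0 := pow_pos (norm_pos_iff.mpr hv0) 2
  have hunn : ∀ t, 0 ≤ u t := fun t => sq_nonneg _
  -- derivative of u
  have hu' : ∀ t, 0 ≤ t → HasDerivAt u (2 * (a - b * u t) * u t) t := by
    intro t ht
    have h := HasDerivAt.inner ℝ (hv t ht) (hv t ht)
    have hxx : ∀ s : ℝ, (inner ℝ (v s) (v s) : ℝ) = u s := fun s =>
      real_inner_self_eq_norm_sq (v s)
    simp only [real_inner_smul_left, real_inner_smul_right, hxx] at h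
    refine h.congr_deriv ?_
    ring
  have hcu : ∀ t, 0 ≤ t → ContinuousAt u t := fun t ht => (hu' t ht).continuousAt
  set c : ℝ := (u 0)⁻¹ - b / a with hc
  set C : ℝ := max ((u 0)⁻¹) (b / a) with hC
  have hCpos : 0 < C := lt_max_of_lt_right (by positivity)
  -- the solution formula bounds 1/u
  have hbound : ∀ T : ℝ, (∀ s ∈ Set.Icc (0:ℝ) T, 0 < u s) →
      ∀ s ∈ Set.Icc (0:ℝ) T, C⁻¹ ≤ u s := by
    intro T hposT s hs
    have hf := self_prop_aux_formula a b ha u hu' T hposT s hs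
    have hre : 0 < Real.exp (-(2 * a * s)) := Real.exp_pos _
    have hre1 : Real.exp (-(2 * a * s)) ≤ 1 := by
      apply Real.exp_le_one_iff.mpr
      nlinarith [hs.1]
    have hyC : (u s)⁻¹ ≤ C := by
      rcases le_or_gt 0 c with h | h
      · calc (u s)⁻¹ = b / a + c * Real.exp (-(2 * a * s)) := hf
          _ ≤ b / a + c * 1 := add_le_add_right (mul_le_mul_of_nonneg_left hre1 h) _
          _ = (u 0)⁻¹ := by rw [hc]; ring
          _ ≤ C := le_max_left _ _
      · calc (u s)⁻¹ = b / a + c * Real.exp (-(2 * a * s)) := hf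
          _ ≤ b / a := by
              have hce : c * Real.exp (-(2 * a * s)) < 0 := mul_neg_of_neg_of_pos h hre
              simpa using add_le_add_left hce.le (b / a)
          _ ≤ C := le_max_right _ _
    have hus : 0 < u s := hposT s hs
    have h2 := inv_anti₀ (inv_pos.mpr hus) hyC
    rwa [inv_inv] at h2
  -- positivity of u on [0, ∞)
  have hpos : ∀ t, 0 ≤ t → 0 < u t := by
    by_contra h
    push_neg at h
    obtain ⟨t₁, ht₁, hut₁⟩ := h
    have hzt₁ : u t₁ = 0 := le_antisymm hut₁ (hunn t₁)
    set Z : Set ℝ := {t | 0 ≤ t ∧ u t = 0} with hZ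
    have hZne : Z.Nonempty := ⟨t₁, ht₁, hzt₁⟩
    have hZbdd : BddBelow Z := ⟨0, fun x hx => hx.1⟩
    set t₀ : ℝ := sInf Z with ht₀
    have ht₀0 : 0 ≤ t₀ := le_csInf hZne fun x hx => hx.1
    have hmemZ : t₀ ∈ Z := by
      obtain ⟨w, hwmono, hwlim, hwmem⟩ := exists_seq_tendsto_sInf hZne hZbdd
      refine ⟨ht₀0, ?_⟩
      have hcu0 : ContinuousAt u t₀ := hcu t₀ ht₀0
      have : Tendsto (u ∘ w) atTop (nhds (u t₀)) := (hcu0.tendsto).comp hwlim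
      have hconst : (u ∘ w) = fun _ => 0 := funext fun n => (hwmem n).2
      rw [hconst] at this
      exact (tendsto_nhds_unique tendsto_const_nhds this).symm
    have ht₀pos : 0 < t₀ := by
      rcases eq_or_lt_of_le ht₀0 with h | h
      · exact absurd hmemZ.2 (by rw [← h]; exact hu0.ne')
      · exact h
    have hposlt : ∀ s ∈ Set.Ico (0:ℝ) t₀, 0 < u s := by
      intro s hs
      rcases (hunn s).lt_or_eq with h | h
      · exact h
      · exact absurd (csInf_le hZbdd ⟨hs.1, h.symm⟩) (not_le.mpr hs.2)
    have hge : ∀ s ∈ Set.Ico (0:ℝ) t₀, C⁻¹ ≤ u s := by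
      intro s hs
      exact hbound s (fun r hr => hposlt r ⟨hr.1, lt_of_le_of_lt hr.2 hs.2⟩) s
        ⟨hs.1, le_refl s⟩
    have hlim : Tendsto u (nhdsWithin t₀ (Set.Iio t₀)) (nhds (u t₀)) :=
      ((hcu t₀ ht₀0).tendsto).mono_left nhdsWithin_le_nhds
    have hev : ∀ᶠ s in nhdsWithin t₀ (Set.Iio t₀), C⁻¹ ≤ u s := by
      filter_upwards [Ioo_mem_nhdsLT_of_mem (Set.mem_Ioc.mpr ⟨ht₀pos, le_refl t₀⟩)]
        with s hs
      exact hge s ⟨hs.1.le, hs.2⟩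
    have : C⁻¹ ≤ u t₀ := ge_of_tendsto hlim hev
    have : (0:ℝ) < u t₀ := lt_of_lt_of_le (inv_pos.mpr hCpos) this
    rw [hmemZ.2] at this
    exact lt_irrefl 0 this
  -- the formula holds for all times
  have hform : ∀ s : ℝ, 0 ≤ s →
      (u s)⁻¹ = b / a + c * Real.exp (-(2 * a * s)) := by
    intro s hs
    exact self_prop_aux_formula a b ha u hu' s (fun r hr => hpos r hr.1) s
      ⟨hs, le_refl s⟩
  -- limits
  have hexp : Tendsto (fun s : ℝ => Real.exp (-(2 * a * s))) atTop (nhds 0) := by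
    rw [Real.tendsto_exp_comp_nhds_zero]
    have h1 : Tendsto (fun s : ℝ => (2 * a) * s) atTop atTop :=
      Tendsto.const_mul_atTop (by positivity) tendsto_id
    exact tendsto_neg_atTop_atBot.comp h1
  have hy : Tendsto (fun s : ℝ => b / a + c * Real.exp (-(2 * a * s))) atTop
      (nhds (b / a)) := by
    have := (tendsto_const_nhds (x := c) (f := atTop)).mul hexp
    have h2 := (tendsto_const_nhds (x := b / a) (f := (atTop : Filter ℝ))).add this
    simpa using h2
  have hba : b / a ≠ 0 := (div_pos hb ha).ne'
  have hyinv : Tendsto (fun s : ℝ => (b / a + c * Real.exp (-(2 * a * s)))⁻¹) atTop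
      (nhds (a / b)) := by
    have := hy.inv₀ hba
    rwa [inv_div] at this
  have hsqrt : Tendsto
      (fun s : ℝ => Real.sqrt ((b / a + c * Real.exp (-(2 * a * s)))⁻¹)) atTop
      (nhds (Real.sqrt (a / b))) :=
    (Real.continuous_sqrt.continuousAt.tendsto).comp hyinv
  apply hsqrt.congr'
  filter_upwards [eventually_ge_atTop (0:ℝ)] with s hs
  have hus : 0 < u s := hpos s hs
  have : u s = (b / a + c * Real.exp (-(2 * a * s)))⁻¹ := by
    rw [← hform s hs, inv_inv]
  rw [← this, hu_def]
  exact Real.sqrt_sq (norm_nonneg _)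
end

section
/- Let d ≥ 1, λ, σ > 0, u₀ ∈ ℝ^d, and let M(v) = (λ/(2πσ))^{d/2} exp(−λ‖v − u₀‖²/(2σ)) be the global Maxwellian with mean u₀ and variance σ/λ in each coordinate. Let H : ℝ^d × ℝ^d → ℝ and ρ : ℝ^d → [0, ∞) be such that y ↦ H(x,y) ρ(y) is integrable for every x, and set f(x,v) = ρ(x) M(v) and (H∗ρ)(x) = ∫_{ℝ^d} H(x,y) ρ(y) dy. Define ξ(f)(x,v) = ∫_{ℝ^d} ∫_{ℝ^d} H(x,y) (w − v) f(y,w) dw dy. Then for every x and v the Fokker–Planck flux vanishes identically: σ (H∗ρ)(x) ∇_v f(x,v) − λ ξ(f)(x,v) f(x,v) = 0. In particular the global Maxwellian profile f = ρ M is a steady state of the operator ∇_v · (σ (H∗ρ) ∇_v f − λ ξ(f) f). -/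
open MeasureTheory Real

section Aux

variable {d : ℕ}

lemma maxAux_int_exp (a : ℝ) (ha : 0 < a) :
    Integrable (fun u : EuclideanSpace ℝ (Fin d) => Real.exp (-a * ‖u‖ ^ 2)) := by
  have h := GaussianFourier.integrable_cexp_neg_mul_sq_norm_add
      (V := EuclideanSpace ℝ (Fin d)) (b := (a : ℂ)) (by simpa using ha) 0 0
  simp only [zero_mul, add_zero] at h
  refine h.re.congr (Filter.Eventually.of_forall fun u => ?_)
  show (Complex.exp (-(a : ℂ) * (‖u‖ : ℂ) ^ 2)).re = Real.exp (-a * ‖u‖ ^ 2)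
  rw [show (-(a : ℂ) * (‖u‖ : ℂ) ^ 2) = ((-a * ‖u‖ ^ 2 : ℝ) : ℂ) by push_cast; ring,
    ← Complex.ofReal_exp, Complex.ofReal_re]

lemma maxAux_int_vec (a : ℝ) (ha : 0 < a) :
    Integrable (fun u : EuclideanSpace ℝ (Fin d) => Real.exp (-a * ‖u‖ ^ 2) • u) := by
  set b := a / 2 with hb
  have hbpos : 0 < b := by positivity
  have hsb : 0 < Real.sqrt b := Real.sqrt_pos.mpr hbpos
  set K := (2 * Real.sqrt b)⁻¹ with hK
  have hint : Integrable (fun u : EuclideanSpace ℝ (Fin d) =>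
      K * Real.exp (-b * ‖u‖ ^ 2)) := (maxAux_int_exp b hbpos).const_mul K
  refine hint.mono' ?_ (Filter.Eventually.of_forall fun u => ?_)
  · exact ((Real.continuous_exp.comp (by fun_prop)).smul continuous_id).aestronglyMeasurable
  · rw [norm_smul, Real.norm_eq_abs, abs_of_pos (Real.exp_pos _)]
    set t := ‖u‖ with htt
    have hexp : b * t ^ 2 + 1 ≤ Real.exp (b * t ^ 2) := by
      have := Real.add_one_le_exp (b * t ^ 2); linarith
    have h2 : 2 * Real.sqrt b * t ≤ b * t ^ 2 + 1 := by
      nlinarith [sq_nonneg (Real.sqrt b * t - 1), Real.sq_sqrt hbpos.le]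
    have hstep : t ≤ K * Real.exp (b * t ^ 2) := by
      rw [hK, inv_mul_eq_div, le_div_iff₀ (by positivity)]
      calc t * (2 * Real.sqrt b) = 2 * Real.sqrt b * t := by ring
        _ ≤ b * t ^ 2 + 1 := h2
        _ ≤ Real.exp (b * t ^ 2) := hexp
    calc Real.exp (-a * t ^ 2) * t
        = (Real.exp (-b * t ^ 2) * t) * Real.exp (-b * t ^ 2) := by
          rw [show -a * t ^ 2 = -b * t ^ 2 + -b * t ^ 2 by rw [hb]; ring, Real.exp_add]
          ring
      _ ≤ (Real.exp (-b * t ^ 2) * (K * Real.exp (b * t ^ 2))) * Real.exp (-b * t ^ 2) := by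
          have h1 := (Real.exp_pos (-b * t ^ 2)).le
          gcongr
      _ = K * Real.exp (-b * t ^ 2) := by
          rw [show Real.exp (-b * t ^ 2) * (K * Real.exp (b * t ^ 2)) * Real.exp (-b * t ^ 2)
            = K * (Real.exp (-b * t ^ 2) * Real.exp (b * t ^ 2)) * Real.exp (-b * t ^ 2) by ring,
            ← Real.exp_add]
          simp

lemma maxAux_odd_zero (a : ℝ) :
    (∫ u : EuclideanSpace ℝ (Fin d), Real.exp (-a * ‖u‖ ^ 2) • u) = 0 := by
  have h := integral_neg_eq_self
      (fun u : EuclideanSpace ℝ (Fin d) => Real.exp (-a * ‖u‖ ^ 2) • u) volume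
  simp only [norm_neg, smul_neg] at h
  rw [integral_neg] at h
  rw [eq_comm, eq_neg_iff_add_eq_zero, ← two_smul ℝ] at h
  exact (smul_eq_zero.mp h).resolve_left two_ne_zero

lemma maxAux_mass (a : ℝ) (ha : 0 < a) :
    (∫ u : EuclideanSpace ℝ (Fin d), Real.exp (-a * ‖u‖ ^ 2))
      = (Real.pi / a) ^ ((d : ℝ) / 2) := by
  rw [GaussianFourier.integral_rexp_neg_mul_sq_norm ha]
  norm_num [finrank_euclideanSpace_fin]

end Aux

/-- The global Maxwellian profile `f(x,v) = ρ(x) M(v)` makes the Fokker–Planck flux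
`σ (H∗ρ) ∇_v f − λ ξ(f) f` vanish identically, hence is a steady state of the
operator `∇_v · (σ (H∗ρ) ∇_v f − λ ξ(f) f)`. -/
theorem maxwellian_is_steady_state
    {d : ℕ} (hd : 1 ≤ d) (lam σ : ℝ) (hlam : 0 < lam) (hσ : 0 < σ)
    (u₀ : EuclideanSpace ℝ (Fin d))
    (Mx : EuclideanSpace ℝ (Fin d) → ℝ)
    (hMx : ∀ v, Mx v = (lam / (2 * Real.pi * σ)) ^ ((d : ℝ) / 2) *
        Real.exp (-lam * ‖v - u₀‖ ^ 2 / (2 * σ)))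
    (H : EuclideanSpace ℝ (Fin d) → EuclideanSpace ℝ (Fin d) → ℝ)
    (ρ : EuclideanSpace ℝ (Fin d) → ℝ) (hρ : ∀ y, 0 ≤ ρ y)
    (hint : ∀ x, MeasureTheory.Integrable (fun y => H x y * ρ y))
    (f : EuclideanSpace ℝ (Fin d) → EuclideanSpace ℝ (Fin d) → ℝ)
    (hf : ∀ x v, f x v = ρ x * Mx v)
    (Hρ : EuclideanSpace ℝ (Fin d) → ℝ)
    (hHρ : ∀ x, Hρ x = ∫ y, H x y * ρ y)
    (ξ : EuclideanSpace ℝ (Fin d) → EuclideanSpace ℝ (Fin d) → EuclideanSpace ℝ (Fin d))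
    (hξ : ∀ x v, ξ x v = ∫ y, ∫ w, (H x y * f y w) • (w - v)) :
    ∀ x v, (σ * Hρ x) • gradient (fun w => f x w) v - (lam * f x v) • ξ x v = 0 := by
  intro x v
  set a : ℝ := lam / (2 * σ) with ha_def
  have ha : 0 < a := by positivity
  set C : ℝ := (lam / (2 * Real.pi * σ)) ^ ((d : ℝ) / 2) with hC_def
  have hpi := Real.pi_pos
  -- rewrite Mx with a
  have hMx' : ∀ w, Mx w = C * Real.exp (-a * ‖w - u₀‖ ^ 2) := by
    intro w
    rw [hMx w]
    congr 2
    rw [ha_def]; ring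
  have hCbase : lam / (2 * Real.pi * σ) = a / Real.pi := by rw [ha_def]; ring
  have hCmass : C * (Real.pi / a) ^ ((d : ℝ) / 2) = 1 := by
    rw [hC_def, hCbase, ← Real.mul_rpow (by positivity) (by positivity),
      show a / Real.pi * (Real.pi / a) = 1 by field_simp, Real.one_rpow]
  -- the first-moment integral
  have hI : (∫ w : EuclideanSpace ℝ (Fin d), Mx w • (w - v)) = u₀ - v := by
    have htrans : (∫ w : EuclideanSpace ℝ (Fin d), Mx w • (w - v))
        = ∫ u : EuclideanSpace ℝ (Fin d), Mx (u + u₀) • (u + u₀ - v) :=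
      (integral_add_right_eq_self (fun w => Mx w • (w - v)) u₀).symm
    have hsplit : ∀ u : EuclideanSpace ℝ (Fin d),
        Mx (u + u₀) • (u + u₀ - v)
          = C • (Real.exp (-a * ‖u‖ ^ 2) • u)
            + (C * Real.exp (-a * ‖u‖ ^ 2)) • (u₀ - v) := by
      intro u
      rw [hMx' (u + u₀)]
      simp only [add_sub_cancel_right]
      rw [show u + u₀ - v = u + (u₀ - v) by abel, smul_add, smul_smul]
    have hint1 : Integrable (fun u : EuclideanSpace ℝ (Fin d) =>
        C • (Real.exp (-a * ‖u‖ ^ 2) • u)) := by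
      exact (maxAux_int_vec a ha).smul C
    have hint2 : Integrable (fun u : EuclideanSpace ℝ (Fin d) =>
        (C * Real.exp (-a * ‖u‖ ^ 2)) • (u₀ - v)) :=
      ((maxAux_int_exp a ha).const_mul C).smul_const (u₀ - v)
    rw [htrans]
    simp_rw [hsplit]
    rw [integral_add hint1 hint2, integral_smul, maxAux_odd_zero a, smul_zero, zero_add,
      integral_smul_const, integral_const_mul, maxAux_mass a ha, hCmass, one_smul]
  -- compute ξ
  have hξ' : ξ x v = Hρ x • (u₀ - v) := by
    rw [hξ, hHρ]
    have hy : ∀ y, (∫ w, (H x y * f y w) • (w - v)) = (H x y * ρ y) • (u₀ - v) := by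
      intro y
      have heq : ∀ w, (H x y * f y w) • (w - v) = (H x y * ρ y) • (Mx w • (w - v)) := by
        intro w
        rw [hf, smul_smul, mul_assoc]
      simp_rw [heq]
      rw [integral_smul, hI]
    simp_rw [hy]
    rw [integral_smul_const]
  -- compute the gradient
  have hMxv : Mx v = C * Real.exp (-a * ‖v - u₀‖ ^ 2) := hMx' v
  have hgrad : HasGradientAt (fun w => f x w)
      ((-(lam / σ) * f x v) • (v - u₀)) v := by
    rw [hasGradientAt_iff_hasFDerivAt]
    have h1 : HasFDerivAt (fun w : EuclideanSpace ℝ (Fin d) => ‖w - u₀‖ ^ 2)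
        (2 • (innerSL ℝ (v - u₀))) v := by
      have hid : HasFDerivAt (fun w : EuclideanSpace ℝ (Fin d) => w - u₀)
          (ContinuousLinearMap.id ℝ (EuclideanSpace ℝ (Fin d))) v :=
        (hasFDerivAt_id v).sub_const u₀
      simpa using hid.norm_sq
    have h2 := h1.const_mul (-a)
    have h3 := h2.exp
    have h4 := h3.const_mul (ρ x * C)
    have hfun : (fun w : EuclideanSpace ℝ (Fin d) =>
        (ρ x * C) * Real.exp (-a * ‖w - u₀‖ ^ 2)) = fun w => f x w := by
      funext w
      rw [hf, hMx' w]
      ring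
    rw [hfun] at h4
    convert h4 using 1
    case e'_9 => rfl
    ext z
    simp only [InnerProductSpace.toDual_apply_apply, ContinuousLinearMap.smul_apply,
      innerSL_apply_apply, smul_eq_mul, nsmul_eq_mul, Nat.cast_ofNat]
    rw [real_inner_smul_left]
    rw [hf, hMxv]
    have hσ' : σ ≠ 0 := hσ.ne'
    rw [ha_def]
    field_simp
  rw [hgrad.gradient, hξ']
  rw [smul_smul, smul_smul]
  rw [show u₀ - v = -(v - u₀) by abel, smul_neg, sub_neg_eq_add, ← add_smul]
  rw [show σ * Hρ x * (-(lam / σ) * f x v) + lam * f x v * Hρ x = 0 by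
    field_simp; ring]
  rw [zero_smul]
end
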